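/- Let |||·||| be a seminorm on a von Neumann algebra M. Then |||·||| is unitarily invariant (|||UTV||| = |||T||| for all unitaries U, V and all T) if and only if |||ATB||| ≤ ‖A‖ · |||T||| · ‖B‖ for all A, T, B in M. -/

import Mathlib

open scoped ComplexOrder

/-- The absolute value `|T| = (T*T)^{1/2}` of a bounded operator on a Hilbert space. -/
noncomputable def opAbs {H : Type} [NormedAddCommGroup H] [InnerProductSpace ℂ H]
    [CompleteSpace H] (T : H →L[ℂ] H) : H →L[ℂ] H := CFC.sqrt (star T * T)

/-- `τ` is a faithful tracial state on the von Neumann algebra `M`. -/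
structure IsFaithfulTracialState {H : Type} [NormedAddCommGroup H] [InnerProductSpace ℂ H]
    [CompleteSpace H] (M : VonNeumannAlgebra H) (τ : (H →L[ℂ] H) → ℂ) : Prop where
  map_add : ∀ S T, τ (S + T) = τ S + τ T
  map_smul : ∀ (c : ℂ) (T), τ (c • T) = c * τ T
  map_one : τ 1 = 1
  pos : ∀ T ∈ M, 0 ≤ τ (star T * T)
  faithful : ∀ T ∈ M, τ (star T * T) = 0 → T = 0
  tracial : ∀ S ∈ M, ∀ T ∈ M, τ (S * T) = τ (T * S)

lemma myIsClosed_centralizer {R : Type*} [NormedRing R] (S : Set R) :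
    IsClosed (Set.centralizer S) := by
  have h : Set.centralizer S = ⋂ m ∈ S, {x : R | m * x = x * m} := by
    ext x; simp [Set.mem_centralizer_iff]
  rw [h]
  exact isClosed_biInter fun m _ =>
    isClosed_eq (continuous_const.mul continuous_id) (continuous_id.mul continuous_const)

section RD
variable {A : Type*} [CStarAlgebra A]

lemma my_two_unitaries [Nontrivial A] (d : A) (hd : IsUnit d) (hdn : ‖d‖ ≤ 1) :
    ∃ w₁ ∈ unitary A, ∃ w₂ ∈ unitary A, w₁ + w₂ = d + d := by
  set b := star d * d with hb_def
  have hbsa : IsSelfAdjoint b := IsSelfAdjoint.star_mul_self d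
  have hspec0 : ∀ x ∈ spectrum ℝ b, 0 ≤ x := spectrum_star_mul_self_nonneg
  have hbu : IsUnit b := hd.star.mul hd
  have hspec_pos : ∀ x ∈ spectrum ℝ b, 0 < x := by
    intro x hx
    rcases (hspec0 x hx).lt_or_eq with h | h
    · exact h
    · rw [← h] at hx
      rw [spectrum.zero_mem_iff] at hx
      exact absurd hbu hx
  have hbnorm : ‖b‖ ≤ 1 := by
    rw [hb_def, CStarRing.norm_star_mul_self]
    nlinarith [norm_nonneg d]
  have hspec1 : ∀ x ∈ spectrum ℝ b, x ≤ 1 := by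
    intro x hx
    calc x ≤ |x| := le_abs_self x
    _ = ‖x‖ := (Real.norm_eq_abs x).symm
    _ ≤ ‖b‖ := spectrum.norm_le_norm_of_mem hx
    _ ≤ 1 := hbnorm
  have hcont_f : ContinuousOn (fun x : ℝ => Real.sqrt x) (spectrum ℝ b) :=
    Real.continuous_sqrt.continuousOn
  have hcont_g : ContinuousOn (fun x : ℝ => Real.sqrt (1 - x)) (spectrum ℝ b) :=
    (Real.continuous_sqrt.comp (by continuity)).continuousOn
  have hcont_fi : ContinuousOn (fun x : ℝ => (Real.sqrt x)⁻¹) (spectrum ℝ b) := fun x hx =>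
    ((Real.continuous_sqrt.continuousAt).inv₀
      (by have := hspec_pos x hx; positivity)).continuousWithinAt
  set h := cfc (fun x : ℝ => Real.sqrt x) b with h_def
  set s := cfc (fun x : ℝ => Real.sqrt (1 - x)) b with s_def
  set h' := cfc (fun x : ℝ => (Real.sqrt x)⁻¹) b with h'_def
  have hsa_h : IsSelfAdjoint h := IsSelfAdjoint.cfc
  have hsa_s : IsSelfAdjoint s := IsSelfAdjoint.cfc
  have hsa_h' : IsSelfAdjoint h' := IsSelfAdjoint.cfc
  have hh : h * h = b := by
    rw [h_def, ← cfc_mul _ _ b hcont_f hcont_f]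
    calc cfc (fun x : ℝ => Real.sqrt x * Real.sqrt x) b
        = cfc (id : ℝ → ℝ) b := cfc_congr fun x hx => Real.mul_self_sqrt (hspec0 x hx)
      _ = b := cfc_id ℝ b hbsa
  have hss : s * s = 1 - b := by
    rw [s_def, ← cfc_mul _ _ b hcont_g hcont_g]
    calc cfc (fun x : ℝ => Real.sqrt (1 - x) * Real.sqrt (1 - x)) b
        = cfc (fun x : ℝ => 1 - x) b :=
          cfc_congr fun x hx => Real.mul_self_sqrt (by linarith [hspec1 x hx])
      _ = cfc (fun _ : ℝ => (1:ℝ)) b - cfc (id : ℝ → ℝ) b := by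
          rw [← cfc_sub _ _ b (by fun_prop) (by fun_prop)]; rfl
      _ = 1 - b := by rw [cfc_const_one ℝ b hbsa, cfc_id ℝ b hbsa]
  have hcomm : h * s = s * h := by
    rw [h_def, s_def, ← cfc_mul _ _ b hcont_f hcont_g, ← cfc_mul _ _ b hcont_g hcont_f]
    exact cfc_congr fun x _ => mul_comm _ _
  have hh'h : h' * h = 1 := by
    rw [h_def, h'_def, ← cfc_mul _ _ b hcont_fi hcont_f]
    calc cfc (fun x : ℝ => (Real.sqrt x)⁻¹ * Real.sqrt x) b
        = cfc (fun _ : ℝ => (1:ℝ)) b := cfc_congr fun x hx =>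
          inv_mul_cancel₀ (by have := hspec_pos x hx; positivity)
      _ = 1 := cfc_const_one ℝ b hbsa
  have hhh' : h * h' = 1 := by
    rw [h_def, h'_def, ← cfc_mul _ _ b hcont_f hcont_fi]
    calc cfc (fun x : ℝ => Real.sqrt x * (Real.sqrt x)⁻¹) b
        = cfc (fun _ : ℝ => (1:ℝ)) b := cfc_congr fun x hx =>
          mul_inv_cancel₀ (by have := hspec_pos x hx; positivity)
      _ = 1 := cfc_const_one ℝ b hbsa
  set v := d * h' with v_def
  obtain ⟨e, he1, he2⟩ : ∃ e : A, d * e = 1 ∧ e * d = 1 := by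
    obtain ⟨u, rfl⟩ := hd
    exact ⟨↑u⁻¹, u.mul_inv, u.inv_mul⟩
  have hvsv : star v * v = 1 := by
    have : star v * v = h' * b * h' := by
      rw [v_def, star_mul, hsa_h'.star_eq, hb_def]
      noncomm_ring
    rw [this, ← hh]
    calc h' * (h * h) * h' = (h' * h) * (h * h') := by noncomm_ring
    _ = 1 := by rw [hh'h, hhh', one_mul]
  have hvvs : v * star v = 1 := by
    have key : (h' * h') * b = 1 := by
      rw [← hh]
      calc h' * h' * (h * h) = h' * (h' * h) * h := by noncomm_ring
      _ = 1 := by rw [hh'h, mul_one, hh'h]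
    calc v * star v = d * (h' * h') * star d := by
          rw [v_def, star_mul, hsa_h'.star_eq]; noncomm_ring
    _ = (d * (h' * h') * star d) * (d * e) := by rw [he1, mul_one]
    _ = d * ((h' * h') * (star d * d)) * e := by noncomm_ring
    _ = d * 1 * e := by rw [← hb_def, key]
    _ = 1 := by rw [mul_one, he1]
  have hv : v ∈ unitary A := Unitary.mem_iff.mpr ⟨hvsv, hvvs⟩
  set t := Complex.I • s with t_def
  have hts : h * t = t * h := by rw [t_def, mul_smul_comm, smul_mul_assoc, hcomm]
  have htt : t * t = -(s * s) := by
    rw [t_def, smul_mul_assoc, mul_smul_comm, smul_smul, Complex.I_mul_I, neg_one_smul]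
  have hstar_t : star t = -t := by
    rw [t_def, star_smul, Complex.star_def, Complex.conj_I, hsa_s.star_eq, neg_smul]
  set p₁ := h + t with p1_def
  set p₂ := h - t with p2_def
  have hstar_p1 : star p₁ = p₂ := by
    rw [p1_def, p2_def, star_add, hsa_h.star_eq, hstar_t, ← sub_eq_add_neg]
  have hstar_p2 : star p₂ = p₁ := by rw [← hstar_p1, star_star]
  have hexpand : p₂ * p₁ = 1 := by
    calc p₂ * p₁ = h * h + (h * t - t * h) - t * t := by rw [p1_def, p2_def]; noncomm_ring
    _ = 1 := by rw [hts, sub_self, add_zero, htt, hh, hss]; abel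
  have hexpand' : p₁ * p₂ = 1 := by
    calc p₁ * p₂ = h * h + (t * h - h * t) - t * t := by rw [p1_def, p2_def]; noncomm_ring
    _ = 1 := by rw [hts, sub_self, add_zero, htt, hh, hss]; abel
  have hp1 : p₁ ∈ unitary A := Unitary.mem_iff.mpr
    ⟨by rw [hstar_p1, hexpand], by rw [hstar_p1, hexpand']⟩
  have hp2 : p₂ ∈ unitary A := Unitary.mem_iff.mpr
    ⟨by rw [hstar_p2, hexpand'], by rw [hstar_p2, hexpand]⟩
  refine ⟨v * p₁, mul_mem hv hp1, v * p₂, mul_mem hv hp2, ?_⟩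
  have hvh : v * h = d := by
    rw [v_def, mul_assoc, hh'h, mul_one]
  calc v * p₁ + v * p₂ = v * h + v * h := by
        rw [p1_def, p2_def, mul_add, mul_sub]; abel
  _ = d + d := by rw [hvh]

lemma my_step [Nontrivial A] (u : A) (hu : u ∈ unitary A) (c : A) (hc : ‖c‖ < 1) :
    ∃ w₁ ∈ unitary A, ∃ w₂ ∈ unitary A, w₁ + w₂ = u + c := by
  have hmem := Unitary.mem_iff.mp hu
  have hnu : ‖u‖ = 1 := CStarRing.norm_coe_unitary (⟨u, hu⟩ : unitary A)
  set d : A := (2⁻¹ : ℂ) • (u + c) with d_def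
  have hfact : u + c = u * (1 + star u * c) := by
    rw [mul_add, mul_one, ← mul_assoc, hmem.2, one_mul]
  have hd_unit : IsUnit d := by
    have h1 : IsUnit (1 + star u * c) := by
      have hn : ‖-(star u * c)‖ < 1 := by
        rw [norm_neg]
        calc ‖star u * c‖ ≤ ‖star u‖ * ‖c‖ := norm_mul_le _ _
        _ = ‖c‖ := by rw [norm_star, hnu, one_mul]
        _ < 1 := hc
      have := (Units.oneSub _ hn).isUnit
      simpa using this
    have h2 : IsUnit u := ⟨⟨u, star u, hmem.2, hmem.1⟩, rfl⟩
    have h3 : IsUnit ((2⁻¹ : ℂ) • (1 : A)) := by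
      rw [← Algebra.algebraMap_eq_smul_one]
      exact (isUnit_iff_ne_zero.mpr (by norm_num : (2⁻¹ : ℂ) ≠ 0)).map (algebraMap ℂ A)
    have h4 : d = ((2⁻¹ : ℂ) • (1 : A)) * (u * (1 + star u * c)) := by
      rw [smul_mul_assoc, one_mul, d_def, hfact]
    rw [h4]
    exact h3.mul (h2.mul h1)
  have hd_norm : ‖d‖ ≤ 1 := by
    rw [d_def, norm_smul]
    have : ‖u + c‖ ≤ 2 := by
      calc ‖u + c‖ ≤ ‖u‖ + ‖c‖ := norm_add_le _ _
      _ ≤ 2 := by rw [hnu]; linarith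
    calc ‖(2⁻¹ : ℂ)‖ * ‖u + c‖ = 2⁻¹ * ‖u + c‖ := by norm_num
    _ ≤ 2⁻¹ * 2 := by linarith [this, norm_nonneg (u + c)]
    _ = 1 := by norm_num
  obtain ⟨w₁, hw₁, w₂, hw₂, hw⟩ := my_two_unitaries d hd_unit hd_norm
  refine ⟨w₁, hw₁, w₂, hw₂, ?_⟩
  rw [hw, d_def, ← add_smul]
  norm_num

lemma my_neg_one_unitary : (-1 : A) ∈ unitary A := by
  rw [Unitary.mem_iff]; constructor <;> simp

lemma my_sum_unitaries [Nontrivial A] (n : ℕ) (c : A) (hc : ‖c‖ < 1) :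
    ∃ l : List A, (∀ u ∈ l, u ∈ unitary A) ∧ l.length = n + 2 ∧ l.sum = n • c := by
  induction n with
  | zero =>
    refine ⟨[1, -1], ?_, rfl, by simp⟩
    intro u hu
    simp only [List.mem_cons, List.mem_singleton] at hu
    rcases hu with rfl | rfl | h
    · exact Unitary.mem_iff.mpr ⟨by simp, by simp⟩
    · exact my_neg_one_unitary
    · exact absurd h List.not_mem_nil
  | succ n ih =>
    obtain ⟨l, hl, hlen, hsum⟩ := ih
    have hne : l ≠ [] := by intro h; rw [h] at hlen; simp at hlen
    obtain ⟨u, t, rfl⟩ := List.exists_cons_of_ne_nil hne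
    obtain ⟨w₁, hw₁, w₂, hw₂, hw⟩ := my_step u (hl u List.mem_cons_self) c hc
    refine ⟨w₁ :: w₂ :: t, ?_, ?_, ?_⟩
    · intro x hx
      simp only [List.mem_cons] at hx
      rcases hx with rfl | rfl | hx
      · exact hw₁
      · exact hw₂
      · exact hl x (List.mem_cons_of_mem u hx)
    · simp only [List.length_cons] at hlen ⊢; omega
    · simp only [List.sum_cons] at hsum ⊢
      rw [← add_assoc, hw, succ_nsmul, ← hsum]
      abel

open Filter Topology in
lemma my_key (ν : A → ℝ) (h0 : ∀ x, 0 ≤ ν x)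
    (hadd : ∀ x y, ν (x + y) ≤ ν x + ν y)
    (hsmul : ∀ (c : ℂ) (x : A), ν (c • x) = ‖c‖ * ν x)
    (hU : ∀ u ∈ unitary A, ∀ v ∈ unitary A, ∀ x, ν (u * x * v) = ν x)
    (a x b : A) : ν (a * x * b) ≤ ‖a‖ * ν x * ‖b‖ := by
  have hν0 : ν 0 = 0 := by simpa using hsmul 0 0
  rcases subsingleton_or_nontrivial A with hS | hN
  · have : a * x * b = 0 := Subsingleton.elim _ _
    rw [this, hν0]
    exact mul_nonneg (mul_nonneg (norm_nonneg a) (h0 x)) (norm_nonneg b)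
  -- list sum bound
  have hsumle : ∀ (C : ℝ), 0 ≤ C → ∀ l : List A, (∀ y ∈ l, ν y ≤ C) →
      ν l.sum ≤ l.length * C := by
    intro C hC l
    induction l with
    | nil => intro _; simpa [hν0]
    | cons y t iht =>
      intro hyl
      have h1 : ν (y + t.sum) ≤ ν y + ν t.sum := hadd _ _
      have h2 : ν t.sum ≤ t.length * C := iht fun z hz => hyl z (List.mem_cons_of_mem y hz)
      have h3 : ν y ≤ C := hyl y List.mem_cons_self
      simp only [List.sum_cons, List.length_cons]
      push_cast
      nlinarith
  have hinner : ∀ (u : A) (m' : List A), (m'.map (fun v => u * x * v)).sum = u * x * m'.sum := by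
    intro u m'
    induction m' with
    | nil => simp
    | cons v r ihm => simp only [List.map_cons, List.sum_cons, mul_add, ihm]
  have hLsum : ∀ (m' l' : List A),
      (l'.flatMap (fun u => m'.map (fun v => u * x * v))).sum = l'.sum * x * m'.sum := by
    intro m' l'
    induction l' with
    | nil => simp
    | cons u tl iht =>
      simp only [List.flatMap_cons, List.sum_append, List.sum_cons, iht, hinner, add_mul]
  have hLlen : ∀ (m' l' : List A),
      (l'.flatMap (fun u => m'.map (fun v => u * x * v))).length
        = l'.length * m'.length := by
    intro m' l'
    induction l' with
    | nil => simp
    | cons u tl iht =>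
      simp only [List.flatMap_cons, List.length_append, List.length_map, iht,
        List.length_cons]
      ring
  -- contraction case
  have hcontr : ∀ a' b' : A, ‖a'‖ < 1 → ‖b'‖ < 1 → ν (a' * x * b') ≤ ν x := by
    intro a' b' ha' hb'
    have hbound : ∀ n : ℕ, 1 ≤ n → (n : ℝ)^2 * ν (a' * x * b') ≤ (((n + 2)^2 : ℕ) : ℝ) * ν x := by
      intro n hn
      obtain ⟨l, hl, hllen, hlsum⟩ := my_sum_unitaries n a' ha'
      obtain ⟨m, hm, hmlen, hmsum⟩ := my_sum_unitaries n b' hb'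
      set L := l.flatMap (fun u => m.map (fun v => u * x * v)) with L_def
      have hmem : ∀ y ∈ L, ν y ≤ ν x := by
        intro y hy
        rw [L_def, List.mem_flatMap] at hy
        obtain ⟨u, hu, hy⟩ := hy
        rw [List.mem_map] at hy
        obtain ⟨v, hv, rfl⟩ := hy
        exact le_of_eq (hU u (hl u hu) v (hm v hv) x)
      have h1 : ν L.sum ≤ L.length * ν x := hsumle (ν x) (h0 x) L hmem
      have h2 : L.sum = ((n:ℂ) * (n:ℂ)) • (a' * x * b') := by
        rw [L_def, hLsum, hlsum, hmsum, ← Nat.cast_smul_eq_nsmul ℂ n a',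
          ← Nat.cast_smul_eq_nsmul ℂ n b', smul_mul_assoc, smul_mul_assoc, mul_smul_comm,
          smul_smul]
      have h3 : ν L.sum = (n:ℝ)^2 * ν (a' * x * b') := by
        rw [h2, hsmul]
        norm_num [sq]
      rw [h3, L_def, hLlen, hllen, hmlen] at h1
      calc (n:ℝ)^2 * ν (a' * x * b') ≤ ((n + 2) * (n + 2) : ℕ) * ν x := h1
      _ = (((n + 2)^2 : ℕ) : ℝ) * ν x := by push_cast; ring
    have hb2 : ∀ n : ℕ, 1 ≤ n → ν (a' * x * b') ≤ (1 + 2 / (n:ℝ))^2 * ν x := by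
      intro n hn
      have hnpos : (0:ℝ) < (n:ℝ) := by exact_mod_cast hn
      have hb := hbound n hn
      have heq : (((n + 2)^2 : ℕ) : ℝ) * ν x = (n:ℝ)^2 * ((1 + 2/(n:ℝ))^2 * ν x) := by
        push_cast
        field_simp
        try ring
      rw [heq] at hb
      exact le_of_mul_le_mul_left hb (by positivity)
    have htend : Tendsto (fun n : ℕ => (1 + 2 / (n:ℝ))^2 * ν x) atTop (𝓝 (ν x)) := by
      have t1 : Tendsto (fun n : ℕ => 2 / (n:ℝ)) atTop (𝓝 0) :=
        tendsto_const_div_atTop_nhds_zero_nat 2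
      have t2 : Tendsto (fun n : ℕ => (1 + 2 / (n:ℝ))^2) atTop (𝓝 ((1 + 0)^2)) :=
        ((tendsto_const_nhds (x := (1:ℝ))).add t1).pow 2
      have t3 := t2.mul_const (ν x)
      norm_num at t3
      exact t3
    exact ge_of_tendsto htend (Filter.eventually_atTop.mpr ⟨1, hb2⟩)
  -- scaling
  have hδ : ∀ δ : ℝ, 0 < δ → ν (a * x * b) ≤ (‖a‖ + δ) * (‖b‖ + δ) * ν x := by
    intro δ hδpos
    have hr : (0:ℝ) < ‖a‖ + δ := by positivity
    have ht : (0:ℝ) < ‖b‖ + δ := by positivity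
    set a' : A := (((‖a‖ + δ : ℝ) : ℂ))⁻¹ • a with a'_def
    set b' : A := (((‖b‖ + δ : ℝ) : ℂ))⁻¹ • b with b'_def
    have hrne : ((‖a‖ + δ : ℝ) : ℂ) ≠ 0 := by exact_mod_cast hr.ne'
    have htne : ((‖b‖ + δ : ℝ) : ℂ) ≠ 0 := by exact_mod_cast ht.ne'
    have ha' : ‖a'‖ < 1 := by
      rw [a'_def, norm_smul, norm_inv, Complex.norm_real, Real.norm_of_nonneg hr.le,
        inv_mul_lt_iff₀ hr, mul_one]
      linarith
    have hb' : ‖b'‖ < 1 := by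
      rw [b'_def, norm_smul, norm_inv, Complex.norm_real, Real.norm_of_nonneg ht.le,
        inv_mul_lt_iff₀ ht, mul_one]
      linarith
    have hstep : a' * x * b' = ((((‖a‖ + δ : ℝ) : ℂ))⁻¹ * (((‖b‖ + δ : ℝ) : ℂ))⁻¹)
        • (a * x * b) := by
      rw [a'_def, b'_def, smul_mul_assoc, smul_mul_assoc, mul_smul_comm, smul_smul]
    have hkey : a * x * b
        = (((‖a‖ + δ : ℝ) : ℂ) * ((‖b‖ + δ : ℝ) : ℂ)) • (a' * x * b') := by
      rw [hstep, smul_smul,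
        show ((‖a‖ + δ : ℝ) : ℂ) * ((‖b‖ + δ : ℝ) : ℂ) * ((((‖a‖ + δ : ℝ) : ℂ))⁻¹ *
          (((‖b‖ + δ : ℝ) : ℂ))⁻¹) = 1 by rw [mul_mul_mul_comm, mul_inv_cancel₀ hrne, mul_inv_cancel₀ htne, one_mul], one_smul]
    rw [hkey, hsmul]
    have hnorm : ‖((‖a‖ + δ : ℝ) : ℂ) * ((‖b‖ + δ : ℝ) : ℂ)‖ = (‖a‖ + δ) * (‖b‖ + δ) := by
      rw [norm_mul, Complex.norm_real, Complex.norm_real, Real.norm_of_nonneg hr.le,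
        Real.norm_of_nonneg ht.le]
    rw [hnorm]
    have := hcontr a' b' ha' hb'
    nlinarith [mul_pos hr ht]
  -- limit δ → 0
  have htend2 : Tendsto (fun k : ℕ => (‖a‖ + 1/((k:ℝ)+1)) * (‖b‖ + 1/((k:ℝ)+1)) * ν x)
      atTop (𝓝 (‖a‖ * ‖b‖ * ν x)) := by
    have t0 : Tendsto (fun k : ℕ => 1/((k:ℝ)+1)) atTop (𝓝 0) :=
      tendsto_one_div_add_atTop_nhds_zero_nat
    have t1 : Tendsto (fun k : ℕ => ‖a‖ + 1/((k:ℝ)+1)) atTop (𝓝 ‖a‖) := by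
      simpa using tendsto_const_nhds.add t0
    have t2 : Tendsto (fun k : ℕ => ‖b‖ + 1/((k:ℝ)+1)) atTop (𝓝 ‖b‖) := by
      simpa using tendsto_const_nhds.add t0
    exact (t1.mul t2).mul_const (ν x)
  have hfinal := ge_of_tendsto htend2 (Filter.Eventually.of_forall fun k =>
    hδ (1/((k:ℝ)+1)) (by positivity))
  calc ν (a * x * b) ≤ ‖a‖ * ‖b‖ * ν x := hfinal
  _ = ‖a‖ * ν x * ‖b‖ := by ring

end RD


/-- A seminorm on a von Neumann algebra `M` is unitarily invariant
(`|||UTV||| = |||T|||` for unitaries `U, V ∈ M`) iff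
`|||ATB||| ≤ ‖A‖ |||T||| ‖B‖` for all `A, T, B ∈ M`. -/
theorem stmt_9 {H : Type} [NormedAddCommGroup H] [InnerProductSpace ℂ H] [CompleteSpace H]
    (M : VonNeumannAlgebra H) (ν : (H →L[ℂ] H) → ℝ)
    (hν0 : ∀ T ∈ M, 0 ≤ ν T)
    (hνadd : ∀ S ∈ M, ∀ T ∈ M, ν (S + T) ≤ ν S + ν T)
    (hνsmul : ∀ (c : ℂ), ∀ T ∈ M, ν (c • T) = ‖c‖ * ν T) :
    (∀ U ∈ M, U ∈ unitary (H →L[ℂ] H) → ∀ V ∈ M, V ∈ unitary (H →L[ℂ] H) →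
        ∀ T ∈ M, ν (U * T * V) = ν T) ↔
      (∀ A ∈ M, ∀ T ∈ M, ∀ B ∈ M, ν (A * T * B) ≤ ‖A‖ * ν T * ‖B‖) := by
  constructor
  · intro hinv A hA T hT B hB
    -- set up the C*-algebra structure on ↥M
    have hclosed : IsClosed (M : Set (H →L[ℂ] H)) := by
      rw [← M.centralizer_centralizer]
      exact myIsClosed_centralizer _
    haveI : SMulMemClass (VonNeumannAlgebra H) ℂ (H →L[ℂ] H) :=
      ⟨fun {s} c {x} hx => s.toStarSubalgebra.smul_mem hx c⟩
    haveI : IsClosed ((M : Set (H →L[ℂ] H))) := hclosed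
    letI : CStarAlgebra ↥M := StarSubalgebra.cstarAlgebra M
    set ν' : ↥M → ℝ := fun y => ν ↑y with ν'_def
    have key := my_key (A := ↥M) ν'
      (fun y => hν0 _ y.2)
      (fun y z => hνadd _ y.2 _ z.2)
      (fun c y => hνsmul c _ y.2)
      (fun u hu v hv y => by
        have hu' := Unitary.mem_iff.mp hu
        have hv' := Unitary.mem_iff.mp hv
        have hu1 : (↑u : H →L[ℂ] H) ∈ unitary (H →L[ℂ] H) := by
          rw [Unitary.mem_iff]
          constructor
          · simpa using congrArg (Subtype.val) hu'.1
          · simpa using congrArg (Subtype.val) hu'.2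
        have hv1 : (↑v : H →L[ℂ] H) ∈ unitary (H →L[ℂ] H) := by
          rw [Unitary.mem_iff]
          constructor
          · simpa using congrArg (Subtype.val) hv'.1
          · simpa using congrArg (Subtype.val) hv'.2
        exact hinv ↑u u.2 hu1 ↑v v.2 hv1 ↑y y.2)
      ⟨A, hA⟩ ⟨T, hT⟩ ⟨B, hB⟩
    exact key
  · intro hle U hU hUu V hV hVu T hT
    rcases subsingleton_or_nontrivial (H →L[ℂ] H) with hS | hN
    · rw [Subsingleton.elim (U * T * V) T]
    · have hUM := Unitary.mem_iff.mp hUu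
      have hVM := Unitary.mem_iff.mp hVu
      have hnU : ‖U‖ = 1 := CStarRing.norm_coe_unitary (⟨U, hUu⟩ : unitary (H →L[ℂ] H))
      have hnV : ‖V‖ = 1 := CStarRing.norm_coe_unitary (⟨V, hVu⟩ : unitary (H →L[ℂ] H))
      have h1 : ν (U * T * V) ≤ ν T := by
        have := hle U hU T hT V hV
        rw [hnU, hnV, one_mul, mul_one] at this
        exact this
      have h2 : ν T ≤ ν (U * T * V) := by
        have hmem : U * T * V ∈ M := mul_mem (mul_mem hU hT) hV
        have := hle (star U) (star_mem hU) (U * T * V) hmem (star V) (star_mem hV)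
        rw [norm_star, norm_star, hnU, hnV, one_mul, mul_one] at this
        have heq : star U * (U * T * V) * star V = T := by
          calc star U * (U * T * V) * star V = (star U * U) * T * (V * star V) := by
                noncomm_ring
          _ = T := by rw [hUM.1, hVM.2, one_mul, mul_one]
        rw [heq] at this
        exact this
      linarith
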